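/- arXiv:1001.4885 — 2 statements merged into one kernel-verified Lean document; each statement's English description precedes it below -/
import Mathlib

section
/- For the Kepler system H = p^2/2 − α/r in n dimensions, with A_i = Σ_j P_{ij} p_j − α x_i/r and P^2 = Σ_{i<j} P_{ij}^2, one has the identity Σ_{i=1}^n A_i^2 = 2 P^2 H + α^2. -/
/-- The radius `r = |x|`. -/
noncomputable def rad (n : ℕ) (x : Fin n → ℝ) : ℝ := Real.sqrt (∑ i : Fin n, x i ^ 2)

/-- Kepler Hamiltonian `H = p²/2 − α/r`. -/
noncomputable def kepler (n : ℕ) (α : ℝ) : (Fin n → ℝ) → (Fin n → ℝ) → ℝ :=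
  fun x p => (∑ i : Fin n, p i ^ 2) / 2 - α / rad n x

/-- Laplace–Runge–Lenz functions `A_i = Σ_j P_{ij} p_j − α x_i / r`. -/
noncomputable def lrl (n : ℕ) (α : ℝ) (i : Fin n) : (Fin n → ℝ) → (Fin n → ℝ) → ℝ :=
  fun x p => (∑ j : Fin n, (x i * p j - x j * p i) * p j) - α * x i / rad n x

/-- `P² = Σ_{i<j} P_{ij}²`. -/
def Psq (n : ℕ) : (Fin n → ℝ) → (Fin n → ℝ) → ℝ :=
  fun x p => ∑ i : Fin n, ∑ j : Fin n, if i < j then (x i * p j - x j * p i) ^ 2 else 0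

theorem stmt_7 (n : ℕ) (α : ℝ) (x p : Fin n → ℝ) (hx : x ≠ 0) :
    ∑ i : Fin n, (lrl n α i x p) ^ 2 = 2 * Psq n x p * kepler n α x p + α ^ 2 := by
  have hX : (0:ℝ) < ∑ i : Fin n, x i ^ 2 := by
    obtain ⟨i, hi⟩ : ∃ i, x i ≠ 0 := by
      by_contra h; push_neg at h; exact hx (funext h)
    exact Finset.sum_pos' (fun j _ => sq_nonneg _)
      ⟨i, Finset.mem_univ i, by positivity⟩
  have hr0 : 0 < rad n x := Real.sqrt_pos.mpr hX
  have hr2 : rad n x ^ 2 = ∑ i : Fin n, x i ^ 2 := Real.sq_sqrt hX.le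
  -- abbreviations (plain lets via generalize-free approach)
  obtain ⟨X, hXdef⟩ : ∃ X, X = ∑ i : Fin n, x i ^ 2 := ⟨_, rfl⟩
  obtain ⟨P, hPdef⟩ : ∃ P, P = ∑ i : Fin n, p i ^ 2 := ⟨_, rfl⟩
  obtain ⟨S, hSdef⟩ : ∃ S, S = ∑ i : Fin n, x i * p i := ⟨_, rfl⟩
  obtain ⟨c, hcdef⟩ : ∃ c, c = α / rad n x := ⟨_, rfl⟩
  have hα2 : α ^ 2 = c ^ 2 * X := by
    rw [hcdef, hXdef, ← hr2]
    field_simp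
  have hlrl : ∀ i, lrl n α i x p = x i * (P - c) - S * p i := by
    intro i
    show (∑ j : Fin n, (x i * p j - x j * p i) * p j) - α * x i / rad n x
        = x i * (P - c) - S * p i
    have h1 : (∑ j : Fin n, (x i * p j - x j * p i) * p j)
        = x i * (∑ j : Fin n, p j ^ 2) - (∑ j : Fin n, x j * p j) * p i := by
      rw [Finset.mul_sum, Finset.sum_mul, ← Finset.sum_sub_distrib]
      exact Finset.sum_congr rfl (fun j _ => by ring)
    rw [h1, ← hPdef, ← hSdef, hcdef]
    field_simp; ring
  -- inner sum for Psq
  have hi : ∀ i : Fin n, ∑ j : Fin n, (x i * p j - x j * p i) ^ 2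
      = x i ^ 2 * P + p i ^ 2 * X - 2 * (x i * p i) * S := by
    intro i
    calc ∑ j : Fin n, (x i * p j - x j * p i) ^ 2
        = ∑ j : Fin n, (x i ^ 2 * p j ^ 2 + p i ^ 2 * x j ^ 2
            - 2 * (x i * p i) * (x j * p j)) :=
          Finset.sum_congr rfl (fun j _ => by ring)
      _ = x i ^ 2 * (∑ j : Fin n, p j ^ 2) + p i ^ 2 * (∑ j : Fin n, x j ^ 2)
            - 2 * (x i * p i) * (∑ j : Fin n, x j * p j) := by
          rw [Finset.sum_sub_distrib, Finset.sum_add_distrib,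
            ← Finset.mul_sum, ← Finset.mul_sum, ← Finset.mul_sum]
      _ = x i ^ 2 * P + p i ^ 2 * X - 2 * (x i * p i) * S := by
          rw [hPdef, hXdef, hSdef]
  have hfull : ∑ i : Fin n, ∑ j : Fin n, (x i * p j - x j * p i) ^ 2
      = 2 * (X * P - S ^ 2) := by
    calc ∑ i : Fin n, ∑ j : Fin n, (x i * p j - x j * p i) ^ 2
        = ∑ i : Fin n, (x i ^ 2 * P + p i ^ 2 * X - 2 * (x i * p i) * S) :=
          Finset.sum_congr rfl (fun i _ => hi i)
      _ = (∑ i : Fin n, x i ^ 2) * P + (∑ i : Fin n, p i ^ 2) * X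
            - 2 * (∑ i : Fin n, x i * p i) * S := by
          rw [Finset.sum_sub_distrib, Finset.sum_add_distrib,
            ← Finset.sum_mul, ← Finset.sum_mul]
          congr 1
          rw [Finset.mul_sum, Finset.sum_mul]
      _ = X * P + P * X - 2 * S * S := by rw [hPdef, hXdef, hSdef]
      _ = 2 * (X * P - S ^ 2) := by ring
  have hPsq : 2 * Psq n x p = 2 * (X * P - S ^ 2) := by
    rw [← hfull]
    show 2 * (∑ i : Fin n, ∑ j : Fin n, if i < j then (x i * p j - x j * p i) ^ 2 else 0) = _
    have hswap : (∑ i : Fin n, ∑ j : Fin n, if i < j then (x i * p j - x j * p i) ^ 2 else 0)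
        = ∑ i : Fin n, ∑ j : Fin n, if j < i then (x i * p j - x j * p i) ^ 2 else 0 := by
      rw [Finset.sum_comm]
      refine Finset.sum_congr rfl (fun i _ => Finset.sum_congr rfl (fun j _ => ?_))
      by_cases h : j < i <;> simp [h] <;> ring
    rw [two_mul]
    nth_rewrite 2 [hswap]
    rw [← Finset.sum_add_distrib]
    refine Finset.sum_congr rfl (fun i _ => ?_)
    rw [← Finset.sum_add_distrib]
    refine Finset.sum_congr rfl (fun j _ => ?_)
    rcases lt_trichotomy i j with h | h | h
    · simp [h, not_lt_of_gt h]
    · subst h; simp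
    · simp [h, not_lt_of_gt h]
  have hk : kepler n α x p = P / 2 - c := by
    show (∑ i : Fin n, p i ^ 2) / 2 - α / rad n x = P / 2 - c
    rw [← hPdef, ← hcdef]
  -- LHS
  have hL : ∑ i : Fin n, (lrl n α i x p) ^ 2
      = X * (P - c) ^ 2 + P * S ^ 2 - 2 * S * ((P - c) * S) := by
    calc ∑ i : Fin n, (lrl n α i x p) ^ 2
        = ∑ i : Fin n, (x i ^ 2 * (P - c) ^ 2 + p i ^ 2 * S ^ 2
            - 2 * (x i * p i) * ((P - c) * S)) :=
          Finset.sum_congr rfl (fun i _ => by rw [hlrl i]; ring)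
      _ = (∑ i : Fin n, x i ^ 2) * (P - c) ^ 2 + (∑ i : Fin n, p i ^ 2) * S ^ 2
            - 2 * (∑ i : Fin n, x i * p i) * ((P - c) * S) := by
          rw [Finset.sum_sub_distrib, Finset.sum_add_distrib,
            ← Finset.sum_mul, ← Finset.sum_mul]
          congr 1
          rw [Finset.mul_sum, Finset.sum_mul]
      _ = X * (P - c) ^ 2 + P * S ^ 2 - 2 * S * ((P - c) * S) := by
          rw [hPdef, hXdef, hSdef]
  rw [hL, hk]
  have h2 : 2 * Psq n x p * (P / 2 - c) = 2 * (X * P - S ^ 2) * (P / 2 - c) := by rw [hPsq]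
  rw [h2]
  linear_combination -hα2
end

section
/- Let A be a skew-symmetric matrix in block-diagonal normal form with 2×2 blocks ((0, α_k), (−α_k, 0)), k = 1,…,s (= ⌊n/2⌋), and a zero 1×1 block if n is odd, where all α_k > 0 are pairwise distinct. Then the image of ad_A : so(n) → so(n), B ↦ [A,B], is exactly the set {B ∈ so(n) : B_{2k−1,2k} = 0 for all k = 1,…,s}, and in particular has dimension n(n−1)/2 − ⌊n/2⌋. -/
open Matrix

/-- The image of `ad_A` restricted to skew-symmetric matrices: `{[A,B] : B ∈ so(n)}`. -/
def adImage (n : ℕ) (A : Matrix (Fin n) (Fin n) ℝ) :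
    Submodule ℝ (Matrix (Fin n) (Fin n) ℝ) where
  carrier := {C | ∃ B, Bᵀ = -B ∧ C = A * B - B * A}
  add_mem' := by
    rintro a b ⟨B1, h1, rfl⟩ ⟨B2, h2, rfl⟩
    refine ⟨B1 + B2, by simp [Matrix.transpose_add, h1, h2, neg_add, add_comm], ?_⟩
    noncomm_ring
  zero_mem' := ⟨0, by simp, by simp⟩
  smul_mem' := by
    rintro c a ⟨B, h, rfl⟩
    exact ⟨c • B, by simp [Matrix.transpose_smul, h], by
      rw [Matrix.mul_smul, Matrix.smul_mul, smul_sub]⟩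

namespace Stmt16

variable (n : ℕ) (α : ℕ → ℝ)

def cf (i : ℕ) : ℝ :=
  if i % 2 = 0 then (if i + 1 < n then α (i / 2) else 0) else -(α (i / 2))

def mf (i : Fin n) : Fin n :=
  if i.val % 2 = 0 then
    (if h2 : i.val + 1 < n then ⟨i.val + 1, h2⟩ else i)
  else ⟨i.val - 1, lt_of_le_of_lt (Nat.sub_le _ _) i.isLt⟩

lemma mf_val (i : Fin n) : (mf n i).val =
    if i.val % 2 = 0 then (if i.val + 1 < n then i.val + 1 else i.val) else i.val - 1 := by
  unfold mf
  split_ifs with h1 h2 h2 <;> simp_all [dif_pos, dif_neg]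

lemma mf_mf (i : Fin n) : mf n (mf n i) = i := by
  apply Fin.ext
  rw [mf_val, mf_val]
  have h1 := i.isLt
  rcases Nat.even_or_odd i.val with ⟨k, hk⟩ | ⟨k, hk⟩ <;> split_ifs <;> omega

lemma mf_div2 (i : Fin n) : (mf n i).val / 2 = i.val / 2 := by
  rw [mf_val]; rcases Nat.even_or_odd i.val with ⟨k, hk⟩ | ⟨k, hk⟩ <;> split_ifs <;> omega

lemma cf_mf (i : Fin n) : cf n α (mf n i).val = -(cf n α i.val) := by
  have h1 := i.isLt
  rw [mf_val]
  unfold cf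
  rcases Nat.even_or_odd i.val with ⟨k, hk⟩ | ⟨k, hk⟩
  · have he : i.val % 2 = 0 := by omega
    by_cases h2 : i.val + 1 < n
    · have ho : ¬((i.val + 1) % 2 = 0) := by omega
      have hd : (i.val + 1) / 2 = i.val / 2 := by omega
      simp [he, h2, ho, hd]
    · simp [he, h2]
  · have ho : ¬(i.val % 2 = 0) := by omega
    have he : (i.val - 1) % 2 = 0 := by omega
    have h3 : i.val - 1 + 1 < n := by omega
    have hd : (i.val - 1) / 2 = i.val / 2 := by omega
    simp [ho, he, h3, hd]


variable {n α} {A : Matrix (Fin n) (Fin n) ℝ}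
  (hA : ∀ i j : Fin n, A i j =
      if i.val % 2 = 0 ∧ j.val = i.val + 1 then α (i.val / 2)
      else if j.val % 2 = 0 ∧ i.val = j.val + 1 then -α (j.val / 2) else 0)

include hA

lemma A_entry (i j : Fin n) : A i j = if j = mf n i then cf n α i.val else 0 := by
  rw [hA]
  have h1 := i.isLt
  have h2 := j.isLt
  have hv : (j = mf n i) ↔ (j.val = (mf n i).val) := ⟨fun h => h ▸ rfl, fun h => Fin.ext h⟩
  simp only [hv, mf_val]
  unfold cf
  by_cases he : i.val % 2 = 0
  · by_cases hj : j.val = i.val + 1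
    · have h3 : i.val + 1 < n := hj ▸ h2
      rw [if_pos ⟨he, hj⟩, if_pos (by rw [if_pos he, if_pos h3]; exact hj), if_pos he,
        if_pos h3]
    · rw [if_neg (by omega), if_neg (by omega)]
      split_ifs <;> first | rfl | omega
  · by_cases hj : j.val % 2 = 0 ∧ i.val = j.val + 1
    · have hd : j.val / 2 = i.val / 2 := by omega
      rw [if_neg (by omega), if_pos hj, hd,
        if_pos (show j.val = _ by rw [if_neg he]; omega), if_neg he]
    · rw [if_neg (by omega), if_neg (by omega)]
      split_ifs <;> first | rfl | omega

lemma mulA_entry (B : Matrix (Fin n) (Fin n) ℝ) (i j : Fin n) :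
    (A * B) i j = cf n α i.val * B (mf n i) j := by
  rw [Matrix.mul_apply]
  rw [Finset.sum_eq_single (mf n i)]
  · rw [A_entry hA, if_pos rfl]
  · intro k _ hk
    rw [A_entry hA, if_neg hk, zero_mul]
  · intro h; exact absurd (Finset.mem_univ _) h

lemma Amul_entry (B : Matrix (Fin n) (Fin n) ℝ) (i j : Fin n) :
    (B * A) i j = -(cf n α j.val) * B i (mf n j) := by
  rw [Matrix.mul_apply]
  rw [Finset.sum_eq_single (mf n j)]
  · rw [A_entry hA]
    rw [if_pos (by rw [mf_mf])]
    rw [cf_mf]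
    ring
  · intro k _ hk
    rw [A_entry hA]
    rw [if_neg, mul_zero]
    intro h
    exact hk (by rw [h, mf_mf])
  · intro h; exact absurd (Finset.mem_univ _) h

lemma ad_entry (B : Matrix (Fin n) (Fin n) ℝ) (i j : Fin n) :
    (A * B - B * A) i j = cf n α i.val * B (mf n i) j + cf n α j.val * B i (mf n j) := by
  rw [Matrix.sub_apply, mulA_entry hA, Amul_entry hA]
  ring


omit hA

variable (hpos : ∀ k, k < n / 2 → 0 < α k)
  (hdist : ∀ k l, k < n / 2 → l < n / 2 → k ≠ l → α k ≠ α l)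

include hpos

lemma cf_spec (i : Fin n) (h : ¬(i.val % 2 = 0 ∧ ¬(i.val + 1 < n))) :
    cf n α i.val ^ 2 = α (i.val / 2) ^ 2 ∧ i.val / 2 < n / 2 := by
  have h1 := i.isLt
  unfold cf
  by_cases he : i.val % 2 = 0
  · have h2 : i.val + 1 < n := by tauto
    rw [if_pos he, if_pos h2]
    exact ⟨rfl, by omega⟩
  · rw [if_neg he]
    exact ⟨by ring, by omega⟩

lemma cf_lone (i : Fin n) (h : i.val % 2 = 0 ∧ ¬(i.val + 1 < n)) :
    cf n α i.val = 0 := by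
  unfold cf; rw [if_pos h.1, if_neg h.2]

include hdist

lemma sq_sub_ne (i j : Fin n) (h : i.val / 2 ≠ j.val / 2) :
    cf n α j.val ^ 2 - cf n α i.val ^ 2 ≠ 0 := by
  have h1 := i.isLt
  have h2 := j.isLt
  by_cases hi : i.val % 2 = 0 ∧ ¬(i.val + 1 < n)
  · by_cases hj : j.val % 2 = 0 ∧ ¬(j.val + 1 < n)
    · exact absurd (by omega : i.val / 2 = j.val / 2) h
    · obtain ⟨e, hlt⟩ := cf_spec hpos j hj
      rw [cf_lone hpos i hi, e]
      have := hpos _ hlt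
      intro hcon; nlinarith
  · obtain ⟨ei, hlti⟩ := cf_spec hpos i hi
    by_cases hj : j.val % 2 = 0 ∧ ¬(j.val + 1 < n)
    · rw [cf_lone hpos j hj, ei]
      have := hpos _ hlti
      intro hcon; nlinarith
    · obtain ⟨ej, hltj⟩ := cf_spec hpos j hj
      rw [ei, ej]
      have hai := hpos _ hlti
      have haj := hpos _ hltj
      have hne : α (i.val / 2) ≠ α (j.val / 2) := hdist _ _ hlti hltj (by omega)
      intro hcon
      rcases lt_or_gt_of_ne hne with hlt | hlt <;> nlinarith

omit hpos hdist

/-- Explicit preimage under ad_A. -/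
noncomputable def Bsol (C : Matrix (Fin n) (Fin n) ℝ) : Matrix (Fin n) (Fin n) ℝ :=
  fun i j => if i.val / 2 = j.val / 2 then 0
    else (cf n α i.val * C (mf n i) j - cf n α j.val * C i (mf n j)) /
      (cf n α j.val ^ 2 - cf n α i.val ^ 2)

include hpos hdist

lemma Bsol_skew (C : Matrix (Fin n) (Fin n) ℝ) (hC : Cᵀ = -C) :
    (Bsol (α := α) C)ᵀ = -(Bsol (α := α) C) := by
  have hCe : ∀ a b, C a b = -C b a := by
    intro a b
    have := congrFun (congrFun hC b) a
    simpa using this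
  ext i j
  rw [Matrix.transpose_apply, Matrix.neg_apply]
  unfold Bsol
  by_cases h0 : i.val / 2 = j.val / 2
  · rw [if_pos h0.symm, if_pos h0, neg_zero]
  · rw [if_neg (Ne.symm h0), if_neg h0]
    have hd : cf n α j.val ^ 2 - cf n α i.val ^ 2 ≠ 0 := sq_sub_ne hpos hdist i j h0
    have hd' : cf n α i.val ^ 2 - cf n α j.val ^ 2 ≠ 0 := by
      intro hcon; exact hd (by linarith)
    rw [hCe (mf n j) i, hCe j (mf n i)]
    field_simp
    ring

include hA in
lemma Bsol_works (C : Matrix (Fin n) (Fin n) ℝ) (hC : Cᵀ = -C)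
    (hC2 : ∀ i j : Fin n, i.val % 2 = 0 → j.val = i.val + 1 → C i j = 0) :
    A * Bsol (α := α) C - Bsol (α := α) C * A = C := by
  have hCe : ∀ a b, C a b = -C b a := by
    intro a b
    have := congrFun (congrFun hC b) a
    simpa using this
  ext i j
  rw [ad_entry hA]
  by_cases h0 : i.val / 2 = j.val / 2
  · have e1 : Bsol (α := α) C (mf n i) j = 0 := by
      unfold Bsol; rw [if_pos (by rw [mf_div2]; exact h0)]
    have e2 : Bsol (α := α) C i (mf n j) = 0 := by
      unfold Bsol; rw [if_pos (by rw [mf_div2]; exact h0)]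
    rw [e1, e2, mul_zero, mul_zero, add_zero]
    have h1 := i.isLt
    have h2 := j.isLt
    rcases (by omega : i.val = j.val ∨ (i.val % 2 = 0 ∧ j.val = i.val + 1) ∨
        (j.val % 2 = 0 ∧ i.val = j.val + 1)) with hc | hc | hc
    · have : i = j := Fin.ext hc
      subst this
      have := hCe i i
      linarith
    · exact (hC2 i j hc.1 hc.2).symm
    · rw [hCe i j, hC2 j i hc.1 hc.2, neg_zero]
  · have hd : cf n α j.val ^ 2 - cf n α i.val ^ 2 ≠ 0 := sq_sub_ne hpos hdist i j h0
    unfold Bsol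
    simp only [mf_div2, mf_mf, cf_mf]
    rw [if_neg h0, if_neg h0, neg_sq]
    field_simp
    ring


omit hpos hdist

include hA in
lemma ad_skew (B : Matrix (Fin n) (Fin n) ℝ) (hB : Bᵀ = -B) :
    (A * B - B * A)ᵀ = -(A * B - B * A) := by
  have hBe : ∀ a b, B a b = -B b a := by
    intro a b
    have := congrFun (congrFun hB b) a
    simpa using this
  ext i j
  rw [Matrix.transpose_apply, Matrix.neg_apply, ad_entry hA, ad_entry hA,
    hBe (mf n j) i, hBe j (mf n i)]
  ring

include hA in
lemma ad_cond (B : Matrix (Fin n) (Fin n) ℝ) (hB : Bᵀ = -B) (i j : Fin n)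
    (he : i.val % 2 = 0) (hj : j.val = i.val + 1) : (A * B - B * A) i j = 0 := by
  have hBe : ∀ a b, B a b = -B b a := by
    intro a b
    have := congrFun (congrFun hB b) a
    simpa using this
  have hdiag : ∀ a, B a a = 0 := fun a => by have := hBe a a; linarith
  have h2 : i.val + 1 < n := hj ▸ j.isLt
  have hmi : mf n i = j := by
    apply Fin.ext
    rw [mf_val, if_pos he, if_pos h2, hj]
  have hmj : mf n j = i := by rw [← hmi, mf_mf]
  rw [ad_entry hA, hmi, hmj, hdiag, hdiag, mul_zero, mul_zero, add_zero]

include hA hpos hdist in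
lemma part1 : ∀ C : Matrix (Fin n) (Fin n) ℝ,
    (∃ B, Bᵀ = -B ∧ C = A * B - B * A) ↔
    (Cᵀ = -C ∧ ∀ i j : Fin n, i.val % 2 = 0 → j.val = i.val + 1 → C i j = 0) := by
  intro C
  constructor
  · rintro ⟨B, hB, rfl⟩
    exact ⟨ad_skew hA B hB, fun i j he hj => ad_cond hA B hB i j he hj⟩
  · rintro ⟨hC, hC2⟩
    exact ⟨Bsol (α := α) C, Bsol_skew hpos hdist C hC,
      (Bsol_works hA hpos hdist C hC hC2).symm⟩


lemma count_aux : ∀ N : ℕ, (∑ i ∈ Finset.range N, ∑ j ∈ Finset.range N,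
    (if i < j ∧ ¬(i % 2 = 0 ∧ j = i + 1) then 1 else 0)) = N * (N - 1) / 2 - N / 2 := by
  intro N
  induction N with
  | zero => simp
  | succ m ih =>
    rw [Finset.sum_range_succ]
    have e1 : (∑ j ∈ Finset.range (m+1),
        (if m < j ∧ ¬(m % 2 = 0 ∧ j = m + 1) then 1 else 0)) = 0 := by
      apply Finset.sum_eq_zero
      intro j hj
      rw [Finset.mem_range] at hj
      rw [if_neg (by omega)]
    rw [e1, add_zero]
    have e2 : ∀ i ∈ Finset.range m, (∑ j ∈ Finset.range (m+1),
        (if i < j ∧ ¬(i % 2 = 0 ∧ j = i + 1) then 1 else 0)) =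
        (∑ j ∈ Finset.range m, (if i < j ∧ ¬(i % 2 = 0 ∧ j = i + 1) then 1 else 0)) +
        (if i < m ∧ ¬(i % 2 = 0 ∧ m = i + 1) then 1 else 0) :=
      fun i _ => Finset.sum_range_succ _ _
    rw [Finset.sum_congr rfl e2, Finset.sum_add_distrib, ih]
    have e3 : (∑ i ∈ Finset.range m, (if i < m ∧ ¬(i % 2 = 0 ∧ m = i + 1) then 1 else 0))
        = m - (if m % 2 = 1 then 1 else 0) := by
      by_cases hm : m % 2 = 1
      · have hcongr : ∀ i ∈ Finset.range m,
            (if i < m ∧ ¬(i % 2 = 0 ∧ m = i + 1) then 1 else 0) =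
            (if ¬(i = m - 1) then 1 else 0) := by
          intro i hi
          rw [Finset.mem_range] at hi
          exact if_congr (by omega) rfl rfl
        rw [Finset.sum_congr rfl hcongr, ← Finset.card_filter]
        have : Finset.filter (fun i => ¬(i = m - 1)) (Finset.range m) =
            (Finset.range m).erase (m - 1) := by
          ext a
          simp [Finset.mem_erase, Finset.mem_filter, and_comm]
        rw [this, Finset.card_erase_of_mem (by rw [Finset.mem_range]; omega),
          Finset.card_range, if_pos hm]
      · have hcongr : ∀ i ∈ Finset.range m,
            (if i < m ∧ ¬(i % 2 = 0 ∧ m = i + 1) then 1 else 0) = 1 := by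
          intro i hi
          rw [Finset.mem_range] at hi
          rw [if_pos (by omega)]
        rw [Finset.sum_congr rfl hcongr, if_neg hm]
        simp
    rw [e3]
    have hmul : (m + 1) * ((m + 1) - 1) = m * (m - 1) + 2 * m := by
      cases m with
      | zero => rfl
      | succ k => simp only [Nat.add_sub_cancel]; ring
    obtain ⟨a, b, ha, hb, hab⟩ : ∃ a b : ℕ, m * (m - 1) = a ∧ (m + 1) * ((m + 1) - 1) = b ∧
        b = a + 2 * m := ⟨_, _, rfl, rfl, hmul⟩
    have ham : m ≤ a + 1 := by
      rw [← ha]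
      cases m with
      | zero => simp
      | succ k => simp only [Nat.succ_sub_one]; nlinarith
    have hpar : a % 2 = 0 := by
      rw [← ha]
      cases m with
      | zero => rfl
      | succ k =>
        rw [Nat.succ_sub_one, mul_comm]
        exact Nat.even_iff.mp (Nat.even_mul_succ_self k)
    rw [ha, hb]
    by_cases hm : m % 2 = 1
    · rw [if_pos hm]; omega
    · rw [if_neg hm]; omega

def Pred (n : ℕ) (p : Fin n × Fin n) : Prop :=
  p.1.val < p.2.val ∧ ¬(p.1.val % 2 = 0 ∧ p.2.val = p.1.val + 1)

instance (n : ℕ) : DecidablePred (Pred n) := fun p => by unfold Pred; infer_instance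

lemma card_T (n : ℕ) : Fintype.card {p : Fin n × Fin n // Pred n p} =
    n * (n - 1) / 2 - n / 2 := by
  rw [Fintype.card_subtype, Finset.card_filter, Fintype.sum_prod_type]
  have e1 : ∀ i : Fin n, (∑ j : Fin n, (if Pred n (i, j) then 1 else 0)) =
      ∑ j ∈ Finset.range n, (if i.val < j ∧ ¬(i.val % 2 = 0 ∧ j = i.val + 1) then 1 else 0) :=
    fun i => Fin.sum_univ_eq_sum_range
      (fun j => if i.val < j ∧ ¬(i.val % 2 = 0 ∧ j = i.val + 1) then 1 else 0) n
  rw [Finset.sum_congr rfl (fun i _ => e1 i)]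
  rw [Fin.sum_univ_eq_sum_range
    (fun i => ∑ j ∈ Finset.range n, (if i < j ∧ ¬(i % 2 = 0 ∧ j = i + 1) then 1 else 0)) n]
  exact count_aux n

noncomputable def psi (n : ℕ) :
    ({p : Fin n × Fin n // Pred n p} → ℝ) →ₗ[ℝ] Matrix (Fin n) (Fin n) ℝ where
  toFun f := fun i j => (if h : Pred n (i, j) then f ⟨(i, j), h⟩ else 0)
    - (if h : Pred n (j, i) then f ⟨(j, i), h⟩ else 0)
  map_add' f g := by
    ext i j
    erw [Matrix.add_apply]
    by_cases h1 : Pred n (i, j) <;> by_cases h2 : Pred n (j, i) <;>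
      simp [Matrix.add_apply, h1, h2] <;> ring
  map_smul' c f := by
    ext i j
    erw [Matrix.smul_apply]
    by_cases h1 : Pred n (i, j) <;> by_cases h2 : Pred n (j, i) <;>
      simp [Matrix.smul_apply, h1, h2, smul_eq_mul] <;> ring

lemma psi_apply (n : ℕ) (f : {p : Fin n × Fin n // Pred n p} → ℝ) (i j : Fin n) :
    psi n f i j = (if h : Pred n (i, j) then f ⟨(i, j), h⟩ else 0)
      - (if h : Pred n (j, i) then f ⟨(j, i), h⟩ else 0) := rfl

lemma psi_inj (n : ℕ) : Function.Injective (psi n) := by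
  intro f g h
  funext p
  obtain ⟨⟨i, j⟩, hp⟩ := p
  have h1 := congrFun (congrFun h i) j
  have hp1 : i.val < j.val := hp.1
  have hne : ¬ Pred n (j, i) := fun hc => by
    have hc1 : j.val < i.val := hc.1
    omega
  rw [psi_apply, psi_apply, dif_pos hp, dif_pos hp, dif_neg hne, dif_neg hne] at h1
  simpa using h1


lemma mem_adImage {n : ℕ} {A C : Matrix (Fin n) (Fin n) ℝ} :
    C ∈ adImage n A ↔ ∃ B, Bᵀ = -B ∧ C = A * B - B * A := Iff.rfl

include hA hpos hdist in
lemma psi_range : LinearMap.range (psi n) = adImage n A := by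
  ext C
  rw [LinearMap.mem_range, mem_adImage]
  constructor
  · rintro ⟨f, rfl⟩
    rw [part1 hA hpos hdist]
    constructor
    · ext i j
      rw [Matrix.transpose_apply, Matrix.neg_apply, psi_apply, psi_apply]
      ring
    · intro i j he hj
      rw [psi_apply, dif_neg (fun hc : Pred n (i, j) => hc.2 ⟨he, hj⟩),
        dif_neg (fun hc : Pred n (j, i) => by
          have h1 : j.val < i.val := hc.1; omega), sub_zero]
  · intro hC
    obtain ⟨hskew, hcond⟩ := (part1 hA hpos hdist C).mp hC
    refine ⟨fun p => C p.val.1 p.val.2, ?_⟩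
    have hCe : ∀ a b, C a b = -C b a := fun a b => by
      have := congrFun (congrFun hskew b) a; simpa using this
    ext i j
    rw [psi_apply]
    have hCii : ∀ a : Fin n, C a a = 0 := fun a => by have := hCe a a; linarith
    rcases lt_trichotomy i.val j.val with hlt | heq | hgt
    · have hn2 : ¬ Pred n (j, i) := fun hc => by have h1 : j.val < i.val := hc.1; omega
      by_cases hb : i.val % 2 = 0 ∧ j.val = i.val + 1
      · have hn1 : ¬ Pred n (i, j) := fun hc => hc.2 hb
        rw [dif_neg hn1, dif_neg hn2, hcond i j hb.1 hb.2]
        simp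
      · have hp1 : Pred n (i, j) := ⟨hlt, hb⟩
        rw [dif_pos hp1, dif_neg hn2, sub_zero]
    · have heq' : i = j := Fin.ext heq
      subst heq'
      have hn1 : ¬ Pred n (i, i) := fun hc => by have h1 : i.val < i.val := hc.1; omega
      rw [dif_neg hn1, sub_zero, hCii]
    · have hn1 : ¬ Pred n (i, j) := fun hc => by have h1 : i.val < j.val := hc.1; omega
      by_cases hb : j.val % 2 = 0 ∧ i.val = j.val + 1
      · have hn2 : ¬ Pred n (j, i) := fun hc => hc.2 hb
        rw [dif_neg hn1, dif_neg hn2, hCe i j, hcond j i hb.1 hb.2]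
        simp
      · have hp2 : Pred n (j, i) := ⟨hgt, hb⟩
        rw [dif_neg hn1, dif_pos hp2, hCe i j]
        ring
end Stmt16

theorem stmt_16 (n : ℕ) (α : ℕ → ℝ) (A : Matrix (Fin n) (Fin n) ℝ)
    (hA : ∀ i j : Fin n, A i j =
      if i.val % 2 = 0 ∧ j.val = i.val + 1 then α (i.val / 2)
      else if j.val % 2 = 0 ∧ i.val = j.val + 1 then -α (j.val / 2) else 0)
    (hpos : ∀ k, k < n / 2 → 0 < α k)
    (hdist : ∀ k l, k < n / 2 → l < n / 2 → k ≠ l → α k ≠ α l) :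
    (∀ C : Matrix (Fin n) (Fin n) ℝ,
        (∃ B, Bᵀ = -B ∧ C = A * B - B * A) ↔
        (Cᵀ = -C ∧ ∀ i j : Fin n, i.val % 2 = 0 → j.val = i.val + 1 → C i j = 0)) ∧
    Module.finrank ℝ (adImage n A) = n * (n - 1) / 2 - n / 2 := by
  refine ⟨Stmt16.part1 hA hpos hdist, ?_⟩
  rw [← Stmt16.psi_range hA hpos hdist,
    LinearMap.finrank_range_of_inj (Stmt16.psi_inj n),
    Module.finrank_fintype_fun_eq_card, Stmt16.card_T]
end
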